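/- For all natural numbers n and m with m ≤ n, the number of m-tuples (S₁, …, S_m) of vectors in (ZMod 2)^n × (ZMod 2)^n that are linearly independent and satisfy ω(Sᵢ, Sⱼ) = 0 for all 1 ≤ i, j ≤ m equals ∏_{a=0}^{m−1} (2^{2n−a} − 2^a). -/

import Mathlib

/-- The binary symplectic form on `(ZMod 2)^n × (ZMod 2)^n`:
`ω((u,v),(u',v')) = u·v' + u'·v` (mod 2). -/
def symp {n : ℕ} (x y : (Fin n → ZMod 2) × (Fin n → ZMod 2)) : ZMod 2 :=
  (∑ i, x.1 i * y.2 i) + (∑ i, y.1 i * x.2 i)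

abbrev SympV (n : ℕ) := (Fin n → ZMod 2) × (Fin n → ZMod 2)

lemma symp_comm {n : ℕ} (x y : SympV n) : symp x y = symp y x := by
  simp [symp]; abel

lemma symp_self {n : ℕ} (x : SympV n) : symp x x = 0 := by
  simp only [symp]
  exact CharTwo.add_self_eq_zero _

lemma symp_smul_left {n : ℕ} (a : ZMod 2) (x y : SympV n) :
    symp (a • x) y = a * symp x y := by
  simp only [symp, Prod.smul_fst, Prod.smul_snd, Pi.smul_apply, smul_eq_mul, Finset.mul_sum,
    mul_add]
  congr 1 <;> exact Finset.sum_congr rfl fun i _ => by ring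

lemma symp_add_left {n : ℕ} (x x' y : SympV n) :
    symp (x + x') y = symp x y + symp x' y := by
  simp [symp, add_mul, mul_add, Finset.sum_add_distrib]; abel

noncomputable def sympForm (n : ℕ) : LinearMap.BilinForm (ZMod 2) (SympV n) :=
  LinearMap.mk₂ (ZMod 2) symp
    (fun x x' y => symp_add_left x x' y)
    (fun a x y => symp_smul_left a x y)
    (fun x y y' => by rw [symp_comm, symp_add_left, symp_comm y, symp_comm y'])
    (fun a x y => by rw [symp_comm, symp_smul_left, symp_comm, smul_eq_mul])

@[simp] lemma sympForm_apply {n : ℕ} (x y : SympV n) : sympForm n x y = symp x y := rfl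

lemma sympForm_refl (n : ℕ) : (sympForm n).IsRefl := by
  intro x y h; rwa [sympForm_apply, symp_comm, ← sympForm_apply]

lemma sympForm_nondeg (n : ℕ) : (sympForm n).Nondegenerate := by
  refine (LinearMap.IsRefl.nondegenerate_iff_separatingLeft (sympForm_refl n)).2 ?_
  intro x h
  ext i
  · have := h (0, Pi.single i 1)
    simpa [symp, Pi.single_apply, Finset.sum_ite_eq'] using this
  · have := h (Pi.single i 1, 0)
    simpa [symp, Pi.single_apply, Finset.sum_ite_eq] using this

open Submodule Module in
lemma mem_orth_iff {n m : ℕ} (T : Fin m → SympV n) (v : SympV n) :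
    v ∈ (sympForm n).orthogonal (span (ZMod 2) (Set.range T)) ↔ ∀ i, symp (T i) v = 0 := by
  constructor
  · intro h i
    exact h (T i) (subset_span ⟨i, rfl⟩)
  · intro h x hx
    induction hx using span_induction with
    | mem x hx => obtain ⟨i, rfl⟩ := hx; exact h i
    | zero => simp [LinearMap.BilinForm.IsOrtho]
    | add x y _ _ hx hy =>
      rw [map_add, LinearMap.add_apply, hx, hy, add_zero]
    | smul a x _ hx =>
      rw [map_smul, LinearMap.smul_apply, hx, smul_zero]

open Submodule Module in
lemma card_submodule {n : ℕ} (W : Submodule (ZMod 2) (SympV n)) :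
    Nat.card W = 2 ^ finrank (ZMod 2) W := by
  have : Fintype W := Fintype.ofFinite _
  rw [Nat.card_eq_fintype_card, card_eq_pow_finrank (K := ZMod 2), ZMod.card]

open Module in
lemma finrank_sympV (n : ℕ) : finrank (ZMod 2) (SympV n) = 2 * n := by
  simp [Module.finrank_prod, two_mul]

lemma isot_snoc {n m : ℕ} (T : Fin m → SympV n) (v : SympV n) :
    (∀ i j, symp ((Fin.snoc T v : Fin (m+1) → SympV n) i) ((Fin.snoc T v : Fin (m+1) → SympV n) j) = 0) ↔
      (∀ i j, symp (T i) (T j) = 0) ∧ ∀ i, symp (T i) v = 0 := by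
  constructor
  · intro h
    refine ⟨fun i j => ?_, fun i => ?_⟩
    · simpa using h i.castSucc j.castSucc
    · simpa using h i.castSucc (Fin.last m)
  · rintro ⟨h1, h2⟩ i j
    induction i using Fin.lastCases with
    | last =>
      induction j using Fin.lastCases with
      | last => simp [symp_self]
      | cast j => simpa [symp_comm] using h2 j
    | cast i =>
      induction j using Fin.lastCases with
      | last => simpa using h2 i
      | cast j => simpa using h1 i j

open Submodule Module in
lemma prop_snoc_iff {n m : ℕ} (T : Fin m → SympV n) (v : SympV n) :
    (LinearIndependent (ZMod 2) (Fin.snoc T v : Fin (m+1) → SympV n) ∧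
        ∀ i j, symp ((Fin.snoc T v : Fin (m+1) → SympV n) i)
          ((Fin.snoc T v : Fin (m+1) → SympV n) j) = 0) ↔
      ((LinearIndependent (ZMod 2) T ∧ ∀ i j, symp (T i) (T j) = 0) ∧
        (v ∈ (sympForm n).orthogonal (span (ZMod 2) (Set.range T)) ∧
          v ∉ span (ZMod 2) (Set.range T))) := by
  rw [linearIndependent_fin_snoc, isot_snoc, mem_orth_iff]
  tauto

open Submodule Module in
noncomputable def extEquiv (n m : ℕ) :
    {S : Fin (m+1) → SympV n // LinearIndependent (ZMod 2) S ∧ ∀ i j, symp (S i) (S j) = 0} ≃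
    Σ T : {T : Fin m → SympV n // LinearIndependent (ZMod 2) T ∧ ∀ i j, symp (T i) (T j) = 0},
      {v : SympV n // v ∈ (sympForm n).orthogonal (span (ZMod 2) (Set.range T.1)) ∧
        v ∉ span (ZMod 2) (Set.range T.1)} where
  toFun S :=
    have h := (prop_snoc_iff (Fin.init S.1) (S.1 (Fin.last m))).1
      (by rw [Fin.snoc_init_self]; exact S.2)
    ⟨⟨Fin.init S.1, h.1⟩, ⟨S.1 (Fin.last m), h.2⟩⟩
  invFun p := ⟨Fin.snoc p.1.1 p.2.1, (prop_snoc_iff _ _).2 ⟨p.1.2, p.2.2⟩⟩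
  left_inv S := Subtype.ext (Fin.snoc_init_self S.1)
  right_inv p := by
    refine Sigma.subtype_ext (Subtype.ext ?_) ?_
    · simp
    · simp

lemma card_sigma_const {α : Type*} [Finite α] {f : α → Type*} [∀ a, Finite (f a)] {c : ℕ}
    (h : ∀ a, Nat.card (f a) = c) : Nat.card (Sigma f) = Nat.card α * c := by
  cases nonempty_fintype α
  have : ∀ a, Fintype (f a) := fun a => Fintype.ofFinite _
  simp only [Nat.card_eq_fintype_card, Fintype.card_sigma]
  have : ∀ a, Fintype.card (f a) = c := fun a => by
    rw [← Nat.card_eq_fintype_card, h]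
  simp [this, Finset.sum_const, mul_comm]

open Submodule Module in
lemma card_fiber {n m : ℕ} (hm : m ≤ n) (T : Fin m → SympV n)
    (hLI : LinearIndependent (ZMod 2) T) (hiso : ∀ i j, symp (T i) (T j) = 0) :
    Nat.card {v : SympV n // v ∈ (sympForm n).orthogonal (span (ZMod 2) (Set.range T)) ∧
        v ∉ span (ZMod 2) (Set.range T)} = 2 ^ (2 * n - m) - 2 ^ m := by
  set W := span (ZMod 2) (Set.range T) with hW
  set O := (sympForm n).orthogonal W with hO
  have hWO : W ≤ O := by
    rw [hW, span_le]
    rintro x ⟨i, rfl⟩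
    exact (mem_orth_iff T (T i)).2 fun j => hiso j i
  have hrW : finrank (ZMod 2) W = m := by
    rw [hW, finrank_span_eq_card hLI, Fintype.card_fin]
  have hrO : finrank (ZMod 2) O = 2 * n - m := by
    rw [hO, LinearMap.BilinForm.finrank_orthogonal (sympForm_nondeg n),
      finrank_sympV, hrW]
  have e : {v : SympV n // v ∈ O ∧ v ∉ W} ≃ ((O : Set (SympV n)) \ (W : Set (SympV n)) :
      Set (SympV n)) := Equiv.subtypeEquivRight (by intro v; simp [Set.mem_diff])
  rw [Nat.card_congr e, Nat.card_coe_set_eq,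
    Set.ncard_diff (by exact_mod_cast hWO) (Set.toFinite _)]
  have c1 : (O : Set (SympV n)).ncard = 2 ^ (2 * n - m) := by
    rw [← Nat.card_coe_set_eq]
    have := card_submodule O
    rw [hrO] at this
    exact this
  have c2 : (W : Set (SympV n)).ncard = 2 ^ m := by
    rw [← Nat.card_coe_set_eq]
    have := card_submodule W
    rw [hrW] at this
    exact this
  rw [c1, c2]

set_option maxHeartbeats 1000000 in
theorem stmt_1 (n m : ℕ) (hm : m ≤ n) :
    Nat.card {S : Fin m → (Fin n → ZMod 2) × (Fin n → ZMod 2) //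
        LinearIndependent (ZMod 2) S ∧ ∀ i j, symp (S i) (S j) = 0} =
      ∏ a ∈ Finset.range m, (2 ^ (2 * n - a) - 2 ^ a) := by
  induction m with
  | zero =>
    have h : ∀ S : Fin 0 → SympV n,
        LinearIndependent (ZMod 2) S ∧ ∀ i j, symp (S i) (S j) = 0 :=
      fun S => ⟨linearIndependent_empty_type, fun i => i.elim0⟩
    rw [Nat.card_congr (Equiv.subtypeUnivEquiv h), Finset.prod_range_zero]
    exact Nat.card_unique
  | succ m ih =>
    have hm' : m ≤ n := le_trans (Nat.le_succ m) hm
    have hm' : m ≤ n := le_trans (Nat.le_succ m) hm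
    have e1 := Nat.card_congr (extEquiv n m)
    have e2 := card_sigma_const
      (f := fun T : {T : Fin m → SympV n // LinearIndependent (ZMod 2) T ∧
          ∀ i j, symp (T i) (T j) = 0} =>
        {v : SympV n // v ∈ (sympForm n).orthogonal
          (Submodule.span (ZMod 2) (Set.range T.1)) ∧
          v ∉ Submodule.span (ZMod 2) (Set.range T.1)})
      (c := 2 ^ (2 * n - m) - 2 ^ m)
      (fun T => card_fiber hm' T.1 T.2.1 T.2.2)
    rw [e1, e2, ih hm', Finset.prod_range_succ]
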